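/- Let n be a positive integer and let y₁, y₂, y₃, y₄ be pairwise distinct elements of ZMod n. Set z₁ := min(d(y₁,y₂), d(y₂,y₁)). Then f(y₁,y₃) + f(y₁,y₄) + f(y₂,y₃) + f(y₂,y₄) ≥ 4·⌊n/2⌋·⌊(n−1)/2⌋ + z₁² − Δ_n·Δ_{z₁}. -/
import Mathlib


/-- `C2 x` is the binomial-type expression `x(x-1)/2`. -/
def C2 (x : ℤ) : ℤ := x * (x - 1) / 2

/-- `dz x y` is the least nonnegative residue of `y - x` modulo `n`. -/
def dz {n : ℕ} (x y : ZMod n) : ℕ := (y - x).val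

/-- `fz x y = C(d(x,y),2) + C(n - d(x,y),2)` for `x y : ZMod n`. -/
def fz {n : ℕ} (x y : ZMod n) : ℤ := C2 (dz x y) + C2 ((n : ℤ) - dz x y)

/-- `Δ k = 1` if `k` is odd and `0` if `k` is even. -/
def Δ (k : ℕ) : ℤ := if Odd k then 1 else 0

lemma C2_two_mul (x : ℤ) : 2 * C2 x = x * (x - 1) := by
  have h : (2:ℤ) ∣ x * (x - 1) := by
    have := Int.even_mul_succ_self (x - 1)
    have hx : (x-1) * ((x-1)+1) = x * (x-1) := by ring
    rw [hx] at this
    exact this.two_dvd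
  exact Int.mul_ediv_cancel' h

lemma fz_two_mul {n : ℕ} (x y : ZMod n) :
    2 * fz x y = (dz x y : ℤ) * ((dz x y : ℤ) - 1)
      + ((n:ℤ) - dz x y) * ((n:ℤ) - dz x y - 1) := by
  have h1 := C2_two_mul ((dz x y : ℤ))
  have h2 := C2_two_mul ((n:ℤ) - dz x y)
  unfold fz
  linarith

lemma dz_pos {n : ℕ} [NeZero n] {x y : ZMod n} (h : x ≠ y) : 0 < dz x y :=
  ZMod.val_pos.mpr (sub_ne_zero.mpr h.symm)

lemma dz_lt {n : ℕ} [NeZero n] (x y : ZMod n) : dz x y < n := ZMod.val_lt _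

lemma dz_rel {n : ℕ} [NeZero n] (y₁ y₂ y₃ : ZMod n) :
    dz y₁ y₃ = dz y₁ y₂ + dz y₂ y₃ ∨ dz y₁ y₃ + n = dz y₁ y₂ + dz y₂ y₃ := by
  have h : y₃ - y₁ = (y₂ - y₁) + (y₃ - y₂) := by ring
  have hv : dz y₁ y₃ = (dz y₁ y₂ + dz y₂ y₃) % n := by
    unfold dz
    rw [h, ZMod.val_add]
  have h1 : dz y₁ y₂ < n := dz_lt _ _
  have h2 : dz y₂ y₃ < n := dz_lt _ _
  rcases lt_or_ge (dz y₁ y₂ + dz y₂ y₃) n with hlt | hge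
  · left; rw [hv, Nat.mod_eq_of_lt hlt]
  · right
    rw [hv, Nat.mod_eq_sub_mod hge, Nat.mod_eq_of_lt (by omega)]
    omega

lemma coreEven (k a d₁ d₂ z : ℤ)
    (ha1 : 1 ≤ a) (ha2 : a ≤ 2*k - 1)
    (hz1 : z ≤ a) (hz2 : z ≤ 2*k - a) (hz0 : 0 ≤ z)
    (hrel : d₁ - d₂ = a ∨ d₁ - d₂ = a - 2*k) :
    4*(k*(k-1)) + z^2 ≤
      d₁*(d₁-1) + (2*k-d₁)*(2*k-d₁-1) + (d₂*(d₂-1) + (2*k-d₂)*(2*k-d₂-1)) := by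
  have hsq : z^2 ≤ (d₁-d₂)^2 := by rcases hrel with h|h <;> nlinarith
  nlinarith [sq_nonneg (d₁+d₂-2*k)]

lemma coreOdd1 (k a d₁ d₂ z : ℤ)
    (ha1 : 1 ≤ a) (ha2 : a ≤ 2*k)
    (hz1 : z ≤ a) (hz2 : z ≤ 2*k+1 - a) (hz0 : 0 ≤ z)
    (hrel : d₁ - d₂ = a ∨ d₁ - d₂ = a - (2*k+1)) :
    4*k^2 + z^2 - 1 ≤
      d₁*(d₁-1) + (2*k+1-d₁)*(2*k+1-d₁-1) + (d₂*(d₂-1) + (2*k+1-d₂)*(2*k+1-d₂-1)) := by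
  have hsq : z^2 ≤ (d₁-d₂)^2 := by rcases hrel with h|h <;> nlinarith
  nlinarith [sq_nonneg (d₁+d₂-(2*k+1))]

lemma coreOdd2 (k a d₁ d₂ z : ℤ)
    (ha1 : 1 ≤ a) (ha2 : a ≤ 2*k)
    (hz1 : z ≤ a) (hz2 : z ≤ 2*k+1 - a) (hz0 : 0 ≤ z)
    (hzor : z = a ∨ z = 2*k+1 - a)
    (hze : Even z)
    (hrel : d₁ - d₂ = a ∨ d₁ - d₂ = a - (2*k+1)) :
    4*k^2 + z^2 ≤
      d₁*(d₁-1) + (2*k+1-d₁)*(2*k+1-d₁-1) + (d₂*(d₂-1) + (2*k+1-d₂)*(2*k+1-d₂-1)) := by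
  have hzk : z ≤ k := by omega
  obtain ⟨t, ht⟩ := hze
  have hcase : d₁ - d₂ = z ∨ d₂ - d₁ = z ∨ (d₁ - d₂)^2 = (2*k+1-z)^2 := by
    rcases hzor with h | h <;> rcases hrel with h' | h'
    · left; omega
    · right; right
      have he : d₁ - d₂ = -(2*k+1-z) := by omega
      rw [he]; ring
    · right; right
      have he : d₁ - d₂ = 2*k+1-z := by omega
      rw [he]
    · right; left; omega
  rcases hcase with h | h | h
  · have hne : d₁ + d₂ - (2*k+1) ≠ 0 := by omega
    have h1 : 1 ≤ |d₁ + d₂ - (2*k+1)| := Int.one_le_abs hne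
    nlinarith [sq_abs (d₁ + d₂ - (2*k+1)), abs_nonneg (d₁ + d₂ - (2*k+1))]
  · have hne : d₁ + d₂ - (2*k+1) ≠ 0 := by omega
    have h1 : 1 ≤ |d₁ + d₂ - (2*k+1)| := Int.one_le_abs hne
    nlinarith [sq_abs (d₁ + d₂ - (2*k+1)), abs_nonneg (d₁ + d₂ - (2*k+1))]
  · nlinarith [sq_nonneg (d₁+d₂-(2*k+1))]

theorem stmt_12 (n : ℕ) (hn : 0 < n) (y₁ y₂ y₃ y₄ : ZMod n)
    (h12 : y₁ ≠ y₂) (h13 : y₁ ≠ y₃) (h14 : y₁ ≠ y₄)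
    (h23 : y₂ ≠ y₃) (h24 : y₂ ≠ y₄) (h34 : y₃ ≠ y₄)
    (z₁ : ℕ) (hz₁ : z₁ = min (dz y₁ y₂) (dz y₂ y₁)) :
    4 * (((n / 2 : ℕ) : ℤ) * (((n - 1) / 2 : ℕ) : ℤ)) + (z₁ : ℤ) ^ 2
        - Δ n * Δ z₁ ≤
      fz y₁ y₃ + fz y₁ y₄ + fz y₂ y₃ + fz y₂ y₄ := by
  haveI : NeZero n := ⟨hn.ne'⟩
  -- basic nat facts
  have ha0 : 0 < dz y₁ y₂ := dz_pos h12
  have ha1 : dz y₁ y₂ < n := dz_lt _ _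
  have hb0 : 0 < dz y₂ y₁ := dz_pos h12.symm
  have h130 : 0 < dz y₁ y₃ := dz_pos h13
  have h131 : dz y₁ y₃ < n := dz_lt _ _
  have h140 : 0 < dz y₁ y₄ := dz_pos h14
  have h141 : dz y₁ y₄ < n := dz_lt _ _
  have h230 : 0 < dz y₂ y₃ := dz_pos h23
  have h231 : dz y₂ y₃ < n := dz_lt _ _
  have h240 : 0 < dz y₂ y₄ := dz_pos h24
  have h241 : dz y₂ y₄ < n := dz_lt _ _
  have h11 : dz y₁ y₁ = 0 := by simp [dz]
  have hsum : dz y₁ y₂ + dz y₂ y₁ = n := by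
    rcases dz_rel y₁ y₂ y₁ with h | h <;> omega
  have hn2 : 2 ≤ n := by omega
  -- relations
  have hrel3 : (dz y₁ y₃ : ℤ) - dz y₂ y₃ = dz y₁ y₂
      ∨ (dz y₁ y₃ : ℤ) - dz y₂ y₃ = (dz y₁ y₂ : ℤ) - n := by
    rcases dz_rel y₁ y₂ y₃ with h | h <;> omega
  have hrel4 : (dz y₁ y₄ : ℤ) - dz y₂ y₄ = dz y₁ y₂
      ∨ (dz y₁ y₄ : ℤ) - dz y₂ y₄ = (dz y₁ y₂ : ℤ) - n := by
    rcases dz_rel y₁ y₂ y₄ with h | h <;> omega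
  -- z facts
  have hzf1 : (z₁ : ℤ) ≤ dz y₁ y₂ := by omega
  have hzf2 : (z₁ : ℤ) ≤ (n : ℤ) - dz y₁ y₂ := by omega
  have hzf0 : (0 : ℤ) ≤ z₁ := by omega
  have hzor : (z₁ : ℤ) = dz y₁ y₂ ∨ (z₁ : ℤ) = (n : ℤ) - dz y₁ y₂ := by omega
  -- fz expansions
  have hf13 := fz_two_mul y₁ y₃
  have hf14 := fz_two_mul y₁ y₄
  have hf23 := fz_two_mul y₂ y₃
  have hf24 := fz_two_mul y₂ y₄
  rcases Nat.even_or_odd n with hpar | hpar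
  · -- n even, n = 2k
    obtain ⟨k, hk⟩ := hpar
    have hkn : (n : ℤ) = 2 * (k : ℤ) := by omega
    have hΔn : Δ n = 0 := by
      rw [Δ, if_neg]; rw [Nat.odd_iff]; omega
    have e1 : ((n / 2 : ℕ) : ℤ) = (k : ℤ) := by omega
    have e2 : (((n - 1) / 2 : ℕ) : ℤ) = (k : ℤ) - 1 := by omega
    rw [hΔn, e1, e2]
    rw [hkn] at hf13 hf14 hf23 hf24
    have h3 := coreEven k (dz y₁ y₂) (dz y₁ y₃) (dz y₂ y₃) z₁
      (by omega) (by omega) hzf1 (by omega) hzf0 (by omega)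
    have h4 := coreEven k (dz y₁ y₂) (dz y₁ y₄) (dz y₂ y₄) z₁
      (by omega) (by omega) hzf1 (by omega) hzf0 (by omega)
    linarith
  · -- n odd, n = 2k+1
    obtain ⟨k, hk⟩ := hpar
    have hkn : (n : ℤ) = 2 * (k : ℤ) + 1 := by omega
    have hΔn : Δ n = 1 := by
      rw [Δ, if_pos]; rw [Nat.odd_iff]; omega
    have e1 : ((n / 2 : ℕ) : ℤ) = (k : ℤ) := by omega
    have e2 : (((n - 1) / 2 : ℕ) : ℤ) = (k : ℤ) := by omega
    rw [hΔn, e1, e2, one_mul]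
    rw [hkn] at hf13 hf14 hf23 hf24
    rcases Nat.even_or_odd z₁ with hzpar | hzpar
    · have hΔz : Δ z₁ = 0 := by
        rw [Δ, if_neg]; rw [Nat.even_iff] at hzpar; rw [Nat.odd_iff]; omega
      rw [hΔz]
      have hze : Even (z₁ : ℤ) := by
        rw [Int.even_coe_nat]; exact hzpar
      have h3 := coreOdd2 k (dz y₁ y₂) (dz y₁ y₃) (dz y₂ y₃) z₁
        (by omega) (by omega) hzf1 (by omega) hzf0 (by omega) hze (by omega)
      have h4 := coreOdd2 k (dz y₁ y₂) (dz y₁ y₄) (dz y₂ y₄) z₁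
        (by omega) (by omega) hzf1 (by omega) hzf0 (by omega) hze (by omega)
      linarith
    · have hΔz : Δ z₁ = 1 := by
        rw [Δ, if_pos hzpar]
      rw [hΔz]
      have h3 := coreOdd1 k (dz y₁ y₂) (dz y₁ y₃) (dz y₂ y₃) z₁
        (by omega) (by omega) hzf1 (by omega) hzf0 (by omega)
      have h4 := coreOdd1 k (dz y₁ y₂) (dz y₁ y₄) (dz y₂ y₄) z₁
        (by omega) (by omega) hzf1 (by omega) hzf0 (by omega)
      linarith
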